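/- For integers q ≥ 0, m ≥ 0, and k ≥ 0 with (q+1)k ≤ m, the number of q-satisfying sequences of length m having exactly k 1's equals ((m−(q+1)k+1)/(m−k+1)) · binom(m, k). -/

import Mathlib

/-- A sequence of 0's (`false`) and 1's (`true`) is `q`-satisfying if in every
prefix the number of 0's is at least `q` times the number of 1's. -/
def QSatisfying (q : ℕ) (l : List Bool) : Prop :=
  ∀ m : ℕ, m ≤ l.length →
    q * (l.take m).count true ≤ (l.take m).count false

/-- Finset of q-satisfying lists of length m with k trues. -/
def QF (q : ℕ) : ℕ → ℕ → Finset (List Bool)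
  | 0, 0 => {[]}
  | 0, _ + 1 => ∅
  | m + 1, 0 => (QF q m 0).map ⟨fun l => l ++ [false], List.append_left_injective [false]⟩
  | m + 1, k + 1 =>
    if q * (k + 1) + (k + 1) ≤ m + 1 then
      (QF q m (k + 1)).map ⟨fun l => l ++ [false], List.append_left_injective [false]⟩ ∪
      (QF q m k).map ⟨fun l => l ++ [true], List.append_left_injective [true]⟩
    else ∅

theorem qsat_append (q : ℕ) (l : List Bool) (b : Bool) :
    QSatisfying q (l ++ [b]) ↔
      QSatisfying q l ∧ q * (l ++ [b]).count true ≤ (l ++ [b]).count false := by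
  constructor
  · intro H
    refine ⟨fun n hn => ?_, ?_⟩
    · have := H n (by simp; omega)
      rwa [List.take_append_of_le_length hn] at this
    · have := H (l.length + 1) (by simp)
      rwa [List.take_of_length_le (by simp)] at this
  · rintro ⟨H1, H2⟩ n hn
    rcases Nat.lt_or_ge n (l.length + 1) with h | h
    · rw [List.take_append_of_le_length (by omega)]
      exact H1 n (by omega)
    · rwa [List.take_of_length_le (by simpa using h)]

theorem mem_QF (q : ℕ) : ∀ (m k : ℕ) (l : List Bool),
    l ∈ QF q m k ↔ l.length = m ∧ l.count true = k ∧ QSatisfying q l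
  | 0, 0, l => by
      constructor
      · intro h
        simp [QF] at h
        subst h
        exact ⟨rfl, rfl, fun n hn => by simp at hn; simp [hn]⟩
      · rintro ⟨h1, -, -⟩
        simp [QF, List.eq_nil_of_length_eq_zero h1]
  | 0, k + 1, l => by
      simp only [QF, Finset.notMem_empty, false_iff]
      rintro ⟨h1, h2, -⟩
      have := List.count_le_length (l := l) (a := true)
      omega
  | m + 1, 0, l => by
      rw [QF]
      simp only [Finset.mem_map, Function.Embedding.coeFn_mk]
      constructor
      · rintro ⟨l', hl', rfl⟩
        obtain ⟨h1, h2, h3⟩ := (mem_QF q m 0 l').1 hl'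
        refine ⟨by simp [h1], by simp [h2], ?_⟩
        rw [qsat_append]
        refine ⟨h3, ?_⟩
        simp [h2]
      · rintro ⟨h1, h2, h3⟩
        rcases List.eq_nil_or_concat l with rfl | ⟨l', b, rfl⟩
        · simp at h1
        · rw [List.concat_eq_append] at *
          have hb : b = false := by
            rcases b with _ | _
            · rfl
            · exfalso; simp at h2
          subst hb
          refine ⟨l', (mem_QF q m 0 l').2 ⟨by simpa using h1, by simpa using h2,
            ((qsat_append q l' false).1 h3).1⟩, rfl⟩
  | m + 1, k + 1, l => by
      rw [QF]
      split_ifs with hc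
      · simp only [Finset.mem_union, Finset.mem_map, Function.Embedding.coeFn_mk]
        constructor
        · rintro (⟨l', hl', rfl⟩ | ⟨l', hl', rfl⟩)
          · obtain ⟨h1, h2, h3⟩ := (mem_QF q m (k + 1) l').1 hl'
            refine ⟨by simp [h1], by simp [h2], ?_⟩
            rw [qsat_append]
            refine ⟨h3, ?_⟩
            have hfull := h3 l'.length le_rfl
            rw [List.take_length, h2] at hfull
            rw [show (l' ++ [false]).count true = k + 1 by simp [h2],
              show (l' ++ [false]).count false = l'.count false + 1 by simp]
            omega
          · obtain ⟨h1, h2, h3⟩ := (mem_QF q m k l').1 hl'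
            refine ⟨by simp [h1], by simp [h2], ?_⟩
            rw [qsat_append]
            refine ⟨h3, ?_⟩
            have hcf : l'.count true + l'.count false = l'.length := by
              have := l'.count_true_add_count_false; omega
            rw [show (l' ++ [true]).count true = k + 1 by simp [h2],
              show (l' ++ [true]).count false = l'.count false by simp]
            omega
        · rintro ⟨h1, h2, h3⟩
          rcases List.eq_nil_or_concat l with rfl | ⟨l', b, rfl⟩
          · simp at h1
          · rw [List.concat_eq_append] at *
            obtain ⟨h3a, h3b⟩ := (qsat_append q l' b).1 h3
            rcases b with _ | _
            · exact Or.inl ⟨l', (mem_QF q m (k + 1) l').2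
                ⟨by simpa using h1, by simpa using h2, h3a⟩, rfl⟩
            · exact Or.inr ⟨l', (mem_QF q m k l').2
                ⟨by simpa using h1, by simpa using h2, h3a⟩, rfl⟩
      · simp only [Finset.notMem_empty, false_iff]
        rintro ⟨h1, h2, h3⟩
        have hfull := h3 l.length le_rfl
        rw [List.take_length, h2] at hfull
        have hcf : l.count true + l.count false = l.length := by
          have := l.count_true_add_count_false; omega
        omega

theorem QF_card_zero (q : ℕ) : ∀ m, (QF q m 0).card = 1
  | 0 => rfl
  | m + 1 => by rw [QF, Finset.card_map]; exact QF_card_zero q m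

theorem QF_card_succ (q m k : ℕ) (hc : q * (k + 1) + (k + 1) ≤ m + 1) :
    (QF q (m + 1) (k + 1)).card = (QF q m (k + 1)).card + (QF q m k).card := by
  rw [QF, if_pos hc, Finset.card_union_of_disjoint, Finset.card_map, Finset.card_map]
  rw [Finset.disjoint_left]
  rintro a ha hb
  simp only [Finset.mem_map, Function.Embedding.coeFn_mk] at ha hb
  obtain ⟨x, -, rfl⟩ := ha
  obtain ⟨y, -, hy⟩ := hb
  have := congrArg List.getLast? hy
  simp [List.getLast?_concat] at this

theorem QF_card_stop (q m k : ℕ) (hc : ¬ q * (k + 1) + (k + 1) ≤ m + 1) :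
    (QF q (m + 1) (k + 1)).card = 0 := by
  rw [QF, if_neg hc, Finset.card_empty]

private lemma key_identity (q m k' : ℕ) (hkm : k' + 1 ≤ m) :
    ((m:ℚ) - ((q:ℚ)+1)*(k'+1) + 1)/((m:ℚ)-(k'+1)+1) * (Nat.choose m (k'+1) : ℚ) +
    ((m:ℚ) - ((q:ℚ)+1)*k' + 1)/((m:ℚ)-k'+1) * (Nat.choose m k' : ℚ) =
    (((m:ℚ)+1) - ((q:ℚ)+1)*(k'+1) + 1)/(((m:ℚ)+1)-(k'+1)+1) * (Nat.choose (m+1) (k'+1) : ℚ) := by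
  have hkm' : (k':ℚ) + 1 ≤ m := by exact_mod_cast hkm
  have hrel : (Nat.choose m (k'+1) : ℚ) * (k'+1) = (Nat.choose m k' : ℚ) * ((m:ℚ) - k') := by
    have h := Nat.choose_succ_right_eq m k'
    calc (Nat.choose m (k'+1) : ℚ) * (k'+1)
        = ((Nat.choose m (k'+1) * (k'+1) : ℕ) : ℚ) := by push_cast; ring
      _ = ((Nat.choose m k' * (m - k') : ℕ) : ℚ) := by rw [h]
      _ = (Nat.choose m k' : ℚ) * ((m:ℚ) - k') := by push_cast [show k' ≤ m by omega]; ring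
  have hpascal : (Nat.choose (m+1) (k'+1) : ℚ)
      = (Nat.choose m k' : ℚ) + (Nat.choose m (k'+1) : ℚ) := by
    rw [Nat.choose_succ_succ']; push_cast; ring
  have hd1 : ((m:ℚ)-(k'+1)+1) ≠ 0 := by intro h0; nlinarith
  have hd2 : ((m:ℚ)-k'+1) ≠ 0 := by intro h0; nlinarith
  have hd3 : (((m:ℚ)+1)-(k'+1)+1) ≠ 0 := by intro h0; nlinarith
  rw [hpascal]
  field_simp
  linear_combination (-(q:ℚ)*((m:ℚ)-(k':ℚ)+1)) * hrel

theorem QF_card_eq (q : ℕ) : ∀ m k : ℕ, q * k + k ≤ m + 1 →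
    ((QF q m k).card : ℚ) =
      ((m:ℚ) - ((q:ℚ)+1)*k + 1)/((m:ℚ)-k+1) * (Nat.choose m k : ℚ) := by
  intro m
  induction m with
  | zero =>
    intro k hk
    match k with
    | 0 => simp [QF]
    | k' + 1 =>
      have hk0 : k' = 0 := by omega
      subst hk0
      rw [show (QF q 0 1).card = 0 by simp [QF]]
      rw [show Nat.choose 0 1 = 0 from rfl]
      push_cast
      ring
  | succ m IH =>
    intro k hk
    match k with
    | 0 =>
      rw [QF_card_zero, Nat.choose_zero_right]
      push_cast
      rw [show (m:ℚ) + 1 - ((q:ℚ)+1)*0 + 1 = (m:ℚ)+2 by ring,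
        show (m:ℚ) + 1 - 0 + 1 = (m:ℚ)+2 by ring]
      rw [div_self (by positivity)]
      norm_num
    | k' + 1 =>
      by_cases hc : q * (k' + 1) + (k' + 1) ≤ m + 1
      · rw [QF_card_succ q m k' hc]
        push_cast
        have hmono : q * k' ≤ q * (k' + 1) := Nat.mul_le_mul_left q (by omega)
        rw [IH (k' + 1) hc, IH k' (by omega)]
        by_cases hkm : k' + 1 ≤ m
        · have := key_identity q m k' hkm
          push_cast at this ⊢
          linarith [this]
        · -- k' + 1 = m + 1, forces q = 0
          have ha : q * (k' + 1) = 0 := by omega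
          have hq : q = 0 := by
            rcases Nat.mul_eq_zero.1 ha with h | h
            · exact h
            · omega
          have hk'm : k' = m := by omega
          subst hq
          rw [hk'm, Nat.choose_self, Nat.choose_succ_self, Nat.choose_self]
          push_cast
          rw [show (m:ℚ) - m + 1 = 1 by ring,
            show (m:ℚ) + 1 - ((0:ℚ)+1)*((m:ℚ)+1) + 1 = 1 by ring,
            show (m:ℚ) + 1 - ((m:ℚ)+1) + 1 = 1 by ring]
          norm_num
      · rw [QF_card_stop q m k' hc]
        have heq : q * (k' + 1) + (k' + 1) = m + 2 := by omega
        have heqQ : ((q:ℚ)+1) * ((k':ℚ)+1) = (m:ℚ) + 2 := by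
          have : ((q * (k' + 1) + (k' + 1) : ℕ) : ℚ) = ((m + 2 : ℕ) : ℚ) := by rw [heq]
          push_cast at this
          linarith
        push_cast
        rw [show (m:ℚ) + 1 - ((q:ℚ)+1)*((k':ℚ)+1) + 1 = 0 by linarith]
        simp

/-- For `q, m, k ≥ 0` with `(q+1)k ≤ m`, the number of `q`-satisfying sequences of
length `m` having exactly `k` 1's equals `((m−(q+1)k+1)/(m−k+1)) · C(m, k)`. -/
theorem count_q_satisfying_length (q m k : ℕ) (h : (q + 1) * k ≤ m) :
    (Nat.card {l : List Bool //
        l.length = m ∧ l.count true = k ∧ QSatisfying q l} : ℚ) =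
      ((m : ℚ) - (q + 1) * k + 1) / ((m : ℚ) - k + 1) * Nat.choose m k := by
  have hcard : Nat.card {l : List Bool //
      l.length = m ∧ l.count true = k ∧ QSatisfying q l} = (QF q m k).card := by
    rw [Nat.card_congr (Equiv.subtypeEquivRight fun l => (mem_QF q m k l).symm)]
    exact Nat.card_eq_finsetCard _
  rw [hcard]
  have h' : q * k + k ≤ m + 1 := by
    have : (q + 1) * k = q * k + k := by ring
    omega
  rw [QF_card_eq q m k h']
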